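/- For elements a_1, ..., a_n and b in a ring R, non-negative integers i_1, ..., i_n (each i_j ≥ 1) and s, the iterated commutator [a_1^{i_1} a_2^{i_2} ⋯ a_n^{i_n}, b]_s can be written as an integer linear combination of products of the form [a_1,b]_{w_1^{(1)}} ⋯ [a_1,b]_{w_{i_1}^{(1)}} ⋯ [a_n,b]_{w_1^{(n)}} ⋯ [a_n,b]_{w_{i_n}^{(n)}}, where all indices w_s^{(t)} range over 0, ..., s. -/
import Mathlib


/-- Iterated commutator: `itc a b 0 = a`, `itc a b (k+1) = [itc a b k, b]`. -/
def itc {R : Type*} [Ring R] (a b : R) : ℕ → R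
  | 0 => a
  | k + 1 => itc a b k * b - b * itc a b k

section helpers
variable {R : Type*} [Ring R]

def dd (b x : R) : R := x * b - b * x

lemma itc_zero (a b : R) : itc a b 0 = a := rfl
lemma itc_succ (a b : R) (k : ℕ) : itc a b (k+1) = dd b (itc a b k) := rfl

lemma dd_add (b x y : R) : dd b (x + y) = dd b x + dd b y := by simp only [dd]; noncomm_ring
lemma dd_zero (b : R) : dd b (0 : R) = 0 := by simp [dd]
lemma dd_mul (b x y : R) : dd b (x * y) = dd b x * y + x * dd b y := by simp only [dd]; noncomm_ring
lemma dd_zsmul (b : R) (z : ℤ) (x : R) : dd b (z • x) = z • dd b x := by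
  simp only [dd, smul_sub, smul_mul_assoc, mul_smul_comm]

lemma update_ofFn_prod (m : ℕ) (F : Fin m → R) (j : Fin m) :
    ∃ A B : R, ∀ x, (List.ofFn (Function.update F j x)).prod = A * x * B := by
  induction m with
  | zero => exact j.elim0
  | succ m ih =>
    induction j using Fin.cases with
    | zero =>
      refine ⟨1, (List.ofFn (F ∘ Fin.succ)).prod, fun x => ?_⟩
      rw [List.ofFn_succ]
      have h2 : (fun i : Fin m => Function.update F 0 x i.succ) = F ∘ Fin.succ := by
        funext i
        rw [Function.update_of_ne (by simp [Fin.ext_iff])]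
        rfl
      simp only [List.prod_cons, Function.update_self, h2, one_mul]
    | succ t =>
      obtain ⟨A, B, h⟩ := ih (F ∘ Fin.succ) t
      refine ⟨F 0 * A, B, fun x => ?_⟩
      rw [List.ofFn_succ]
      have h1 : Function.update F t.succ x 0 = F 0 := by
        rw [Function.update_of_ne (by simp [Fin.ext_iff])]
      have h2 : (fun i : Fin m => Function.update F t.succ x i.succ) =
          Function.update (F ∘ Fin.succ) t x := by
        funext i
        rcases eq_or_ne i t with rfl | hne
        · simp
        · rw [Function.update_of_ne (fun h' => hne (Fin.succ_injective _ h')),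
            Function.update_of_ne hne]
          rfl
      simp only [List.prod_cons, h1, h2, h x]
      noncomm_ring
end helpers

section leib
variable {R : Type*} [Ring R]

lemma dd_ofFn_prod (b : R) : ∀ (m : ℕ) (g : Fin m → R),
    dd b (List.ofFn g).prod = ∑ t : Fin m, (List.ofFn (Function.update g t (dd b (g t)))).prod := by
  intro m
  induction m with
  | zero => intro g; simp [dd]
  | succ m ih =>
    intro g
    rw [List.ofFn_succ, List.prod_cons, dd_mul, Fin.sum_univ_succ]
    congr 1
    · have h0 : (fun i : Fin m => Function.update g 0 (dd b (g 0)) i.succ) = fun i => g i.succ := by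
        funext i
        rw [Function.update_of_ne (by simp [Fin.ext_iff])]
      rw [List.ofFn_succ, List.prod_cons, Function.update_self, h0]
    · rw [ih fun i => g i.succ, Finset.mul_sum]
      apply Finset.sum_congr rfl
      intro t _
      rw [List.ofFn_succ, List.prod_cons]
      have h1 : Function.update g t.succ (dd b (g t.succ)) 0 = g 0 := by
        rw [Function.update_of_ne (by simp [Fin.ext_iff])]
      have h2 : (fun i : Fin m => Function.update g t.succ (dd b (g t.succ)) i.succ) =
          Function.update (fun i : Fin m => g i.succ) t (dd b (g t.succ)) := by
        funext i
        rcases eq_or_ne i t with rfl | hne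
        · simp
        · rw [Function.update_of_ne (fun h' => hne (Fin.succ_injective _ h')),
            Function.update_of_ne hne]
      rw [h1, h2]
end leib

section key
variable {R : Type*} [Ring R]

lemma key (n : ℕ) (i : Fin n → ℕ) (c : (j : Fin n) → Fin (i j) → R) (b : R) (s : ℕ) :
    itc ((List.ofFn fun j => (List.ofFn fun t => c j t).prod).prod) b s ∈
      Submodule.span ℤ (Set.range fun w : (j : Fin n) → Fin (i j) → Fin (s+1) =>
        (List.ofFn fun j => (List.ofFn fun t => itc (c j t) b ((w j t : ℕ))).prod).prod) := by
  induction s with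
  | zero =>
    apply Submodule.subset_span
    exact ⟨fun _ _ => 0, by simp [itc_zero]⟩
  | succ s ih =>
    rw [itc_succ]
    set M := Submodule.span ℤ (Set.range fun w : (j : Fin n) → Fin (i j) → Fin (s+2) =>
        (List.ofFn fun j => (List.ofFn fun t => itc (c j t) b ((w j t : ℕ))).prod).prod) with hM
    have main : ∀ x ∈ Submodule.span ℤ (Set.range fun w : (j : Fin n) → Fin (i j) → Fin (s+1) =>
        (List.ofFn fun j => (List.ofFn fun t => itc (c j t) b ((w j t : ℕ))).prod).prod),
        dd b x ∈ M := by
      intro x hx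
      induction hx using Submodule.span_induction with
      | mem x hx =>
        obtain ⟨w, rfl⟩ := hx
        set F : Fin n → R := fun j => (List.ofFn fun t => itc (c j t) b ((w j t : ℕ))).prod with hF
        rw [dd_ofFn_prod]
        apply Submodule.sum_mem
        intro j _
        obtain ⟨A, B, hAB⟩ := update_ofFn_prod n F j
        have hdF : dd b (F j) = ∑ t : Fin (i j),
            (List.ofFn (Function.update (fun t => itc (c j t) b ((w j t : ℕ))) t
              (itc (c j t) b ((w j t : ℕ) + 1)))).prod := by
          rw [hF, dd_ofFn_prod]
          simp only [itc_succ]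
        rw [hAB, hdF, Finset.mul_sum, Finset.sum_mul]
        apply Submodule.sum_mem
        intro t _
        rw [← hAB]
        apply Submodule.subset_span
        refine ⟨Function.update (fun j' => Fin.castSucc ∘ w j') j
          (Function.update (fun t' => (w j t').castSucc) t (w j t).succ), ?_⟩
        have heq : Function.update F j
            (List.ofFn (Function.update (fun t => itc (c j t) b ((w j t : ℕ))) t
              (itc (c j t) b ((w j t : ℕ) + 1)))).prod =
            fun j' => (List.ofFn fun t' => itc (c j' t') b
              (((Function.update (fun j'' => Fin.castSucc ∘ w j'') j
                (Function.update (fun t' => (w j t').castSucc) t (w j t).succ)) j' t' : ℕ))).prod := by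
          funext j'
          rcases eq_or_ne j' j with rfl | hj
          · rw [Function.update_self, Function.update_self]
            congr 1
            congr 1
            funext t'
            rcases eq_or_ne t' t with rfl | ht
            · rw [Function.update_self, Function.update_self, Fin.val_succ]
            · rw [Function.update_of_ne ht, Function.update_of_ne ht, Fin.coe_castSucc]
          · rw [Function.update_of_ne hj, Function.update_of_ne hj]
            simp only [Function.comp_apply, Fin.coe_castSucc, hF]
        exact (congrArg (fun f => (List.ofFn f).prod) heq).symm
      | zero => rw [dd_zero]; exact M.zero_mem
      | add x y _ _ hx hy => rw [dd_add]; exact M.add_mem hx hy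
      | smul z x _ hx => rw [dd_zsmul]; exact M.smul_mem z hx
    exact main _ ih
end key

/-- `[a_1^{i_1} ⋯ a_n^{i_n}, b]_s` is an integer linear combination of ordered products
`[a_1,b]_{w_1^{(1)}} ⋯ [a_1,b]_{w_{i_1}^{(1)}} ⋯ [a_n,b]_{w_1^{(n)}} ⋯ [a_n,b]_{w_{i_n}^{(n)}}`
where all indices range over `0, …, s`. -/
theorem stmt_2 {R : Type*} [Ring R] (n : ℕ) (a : Fin n → R) (b : R)
    (i : Fin n → ℕ) (hi : ∀ j, 1 ≤ i j) (s : ℕ) :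
    ∃ E : ((j : Fin n) → Fin (i j) → Fin (s + 1)) → ℤ,
      itc ((List.ofFn fun j => a j ^ i j).prod) b s =
        ∑ w : (j : Fin n) → Fin (i j) → Fin (s + 1),
          E w • (List.ofFn fun j =>
            (List.ofFn fun t => itc (a j) b (w j t)).prod).prod := by
  have hk := key n i (fun j _ => a j) b s
  have h1 : (List.ofFn fun j => (List.ofFn fun _ : Fin (i j) => a j).prod) =
      (List.ofFn fun j => a j ^ i j) := by
    congr 1
    funext j
    rw [List.ofFn_const, List.prod_replicate]
  rw [h1, Finsupp.mem_span_range_iff_exists_finsupp] at hk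
  obtain ⟨E, hE⟩ := hk
  refine ⟨E, ?_⟩
  rw [← hE, Finsupp.sum_fintype]
  intro w
  exact zero_smul ℤ _
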